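/- Let T : ℓ₁ → ℓ₁ be the map T(x₁,x₂,…) = (1, x₁, x₂, …), and define h : ℓ₁ → ℝ by h(x) = Σ_{k≥1} (|x_k − 1| − 1). Then h is well-defined (the series converges) and h(Tx) = h(x) − 1 for all x ∈ ℓ₁. In particular T has no fixed point in ℓ₁. -/

import Mathlib

open scoped ENNReal

/-- For the shift `T(x₁,x₂,…) = (1,x₁,x₂,…)` on `ℓ₁` and
`h x = Σ_k (|x_k − 1| − 1)`: the series converges, `h(Tx) = h(x) − 1`,
and `T` has no fixed point. -/
theorem stmt_7 (T : lp (fun _ : ℕ => ℝ) 1 → lp (fun _ : ℕ => ℝ) 1)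
    (hT : ∀ x : lp (fun _ : ℕ => ℝ) 1,
      (T x) 0 = 1 ∧ ∀ n : ℕ, (T x) (n + 1) = x n)
    (h : lp (fun _ : ℕ => ℝ) 1 → ℝ)
    (hh : ∀ x, h x = ∑' k : ℕ, (|x k - 1| - 1)) :
    (∀ x : lp (fun _ : ℕ => ℝ) 1, Summable (fun k : ℕ => |x k - 1| - 1)) ∧
    (∀ x : lp (fun _ : ℕ => ℝ) 1, h (T x) = h x - 1) ∧
    (∀ x : lp (fun _ : ℕ => ℝ) 1, T x ≠ x) := by
  have hsum : ∀ x : lp (fun _ : ℕ => ℝ) 1, Summable (fun k : ℕ => |x k - 1| - 1) := by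
    intro x
    have hx : Summable (fun k : ℕ => ‖(x : ℕ → ℝ) k‖) := by
      simpa using (lp.memℓp x).summable (by norm_num)
    refine hx.of_norm_bounded (fun k => ?_)
    have h1 := abs_abs_sub_abs_le_abs_sub ((x : ℕ → ℝ) k - 1) (-1 : ℝ)
    have h2 : (x : ℕ → ℝ) k - 1 - (-1) = (x : ℕ → ℝ) k := by ring
    rw [h2] at h1
    simp only [abs_neg, abs_one] at h1
    simpa [Real.norm_eq_abs] using h1
  have hmain : ∀ x : lp (fun _ : ℕ => ℝ) 1, h (T x) = h x - 1 := by
    intro x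
    obtain ⟨h0, hs⟩ := hT x
    rw [hh, hh]
    have := Summable.tsum_eq_zero_add (hsum (T x))
    rw [this, h0]
    simp only [hs]
    rw [show |(1:ℝ) - 1| = 0 by norm_num]
    ring
  refine ⟨hsum, hmain, fun x hx => ?_⟩
  have := hmain x
  rw [hx] at this
  linarith
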